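/- Let H be a hedge graph in which every triangle is covered by at most two hedges, and let R(x) denote the set of hedges dominating hedge x. If U is a set of hedges whose removal makes H P_3-free and x ∈ U, then R(x) ⊆ U. -/
import Mathlib


/-- Adjacency after deleting the set `U` of hedges, where `ℓ` assigns to each edge its
hedge. -/
def delAdj {V Λ : Type*} (G : SimpleGraph V) (ℓ : Sym2 V → Λ) (U : Set Λ)
    (a b : V) : Prop :=
  G.Adj a b ∧ ℓ s(a, b) ∉ U

/-- `D(x)`: hedges `y` such that some triangle has exactly one edge in hedge `x` and its
other two edges in hedge `y`. -/
def Dset {V Λ : Type*} (G : SimpleGraph V) (ℓ : Sym2 V → Λ) (x : Λ) : Set Λ :=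
  {y | y ≠ x ∧ ∃ a b c : V, G.Adj a b ∧ G.Adj b c ∧ G.Adj a c ∧
    ℓ s(a, c) = x ∧ ℓ s(a, b) = y ∧ ℓ s(b, c) = y}

/-- `R(x)`: the hedges dominating `x`, i.e. admitting a chain `y = h₁, …, h_p = x` with
`hᵢ ∈ D(hᵢ₊₁)`. -/
def Rset {V Λ : Type*} (G : SimpleGraph V) (ℓ : Sym2 V → Λ) (x : Λ) : Set Λ :=
  {y | Relation.ReflTransGen (fun a b => a ∈ Dset G ℓ b) y x}

/-- in a bi-hedge graph (every triangle covered by at most two hedges), if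
removing the hedges of `U` yields a `P₃`-free graph and `x ∈ U`, then `R(x) ⊆ U`. -/
theorem stmt17 {V Λ : Type*} (G : SimpleGraph V) (ℓ : Sym2 V → Λ) (U : Set Λ)
    (hbi : ∀ a b c : V, G.Adj a b → G.Adj b c → G.Adj a c →
      (ℓ s(a, b) = ℓ s(b, c) ∨ ℓ s(b, c) = ℓ s(a, c) ∨ ℓ s(a, b) = ℓ s(a, c)))
    (hsol : ∀ a b c : V, delAdj G ℓ U a b → delAdj G ℓ U b c → a ≠ c → delAdj G ℓ U a c)
    (x : Λ) (hx : x ∈ U) :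
    Rset G ℓ x ⊆ U := by
  intro y hy
  induction hy using Relation.ReflTransGen.head_induction_on with
  | refl => exact hx
  | head hstep _ ih =>
    rename_i a b _
    obtain ⟨-, p, q, r, hpq, hqr, hpr, hz, hab, hbc⟩ := hstep
    by_contra hnot
    have h1 : delAdj G ℓ U p q := ⟨hpq, hab ▸ hnot⟩
    have h2 : delAdj G ℓ U q r := ⟨hqr, hbc ▸ hnot⟩
    have h3 := hsol p q r h1 h2 hpr.ne
    exact h3.2 (hz ▸ ih)
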